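/- arXiv:1711.00565 — 3 statements merged into one kernel-verified Lean document; each statement's English description precedes it below -/
import Mathlib

section
/- Let Ext: {0,1}^ℓ × {0,1}^d → {0,1}^s be a (k, ε)-extractor and f: {0,1}^s → V a function into a finite set V. Let δ = ε·|V|/2. Then the number of strings x ∈ {0,1}^ℓ for which the distributions f(U_s) and f(Ext(x, U_d)) are not δ-close in total variation distance is at most 2^{k+1}·|V|. -/
open Finset

/-- If a signed measure sums to zero, the mass of any set is at most half the
total variation. -/
lemma stmt0_half_abs {α : Type*} [Fintype α] [DecidableEq α] (g : α → ℝ) (h0 : ∑ z, g z = 0)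
    (A : Finset α) : |∑ z ∈ A, g z| ≤ (1/2) * ∑ z, |g z| := by
  have hsplit : ∑ z ∈ A, g z + ∑ z ∈ Aᶜ, g z = ∑ z, g z :=
    Finset.sum_add_sum_compl A g
  have h1 : ∑ z ∈ A, g z = - ∑ z ∈ Aᶜ, g z := by linarith
  have h2 : |∑ z ∈ A, g z| ≤ ∑ z ∈ A, |g z| := Finset.abs_sum_le_sum_abs _ _
  have h3 : |∑ z ∈ Aᶜ, g z| ≤ ∑ z ∈ Aᶜ, |g z| := Finset.abs_sum_le_sum_abs _ _
  have h4 : ∑ z ∈ A, |g z| + ∑ z ∈ Aᶜ, |g z| = ∑ z, |g z| :=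
    Finset.sum_add_sum_compl A _
  have h5 : |∑ z ∈ A, g z| = |∑ z ∈ Aᶜ, g z| := by rw [h1, abs_neg]
  linarith

set_option maxHeartbeats 1000000 in
/-- Extractors are good samplers (Proposition, Zuckerman). -/
theorem stmt_0 (ℓ d s k : ℕ) (ε : ℝ) {V : Type} [Fintype V] [DecidableEq V]
    (Ext : (Fin ℓ → Bool) → (Fin d → Bool) → (Fin s → Bool))
    (f : (Fin s → Bool) → V)
    -- `Ext` is a (k, ε)-extractor
    (hExt : ∀ p : (Fin ℓ → Bool) → ℝ,
      (∀ x, 0 ≤ p x) → (∑ x, p x) = 1 → (∀ x, p x ≤ ((2:ℝ)^k)⁻¹) →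
      (1/2) * ∑ z : Fin s → Bool,
        |(∑ x, ∑ y : Fin d → Bool, p x * (if Ext x y = z then ((2:ℝ)^d)⁻¹ else 0))
          - ((2:ℝ)^s)⁻¹| ≤ ε) :
    -- the number of x for which f(U_s) and f(Ext(x, U_d)) are not (ε·|V|/2)-close
    Nat.card {x : Fin ℓ → Bool //
      ¬ ((1/2) * ∑ v : V,
        |(∑ u : Fin s → Bool, if f u = v then ((2:ℝ)^s)⁻¹ else 0)
          - (∑ y : Fin d → Bool, if f (Ext x y) = v then ((2:ℝ)^d)⁻¹ else 0)|
          ≤ ε * (Fintype.card V) / 2)}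
      ≤ 2^(k+1) * Fintype.card V := by
  classical
  set Q : V → ℝ := fun v => ∑ u : Fin s → Bool, if f u = v then ((2:ℝ)^s)⁻¹ else 0 with hQ
  set P : (Fin ℓ → Bool) → V → ℝ :=
    fun x v => ∑ y : Fin d → Bool, if f (Ext x y) = v then ((2:ℝ)^d)⁻¹ else 0 with hP
  -- key step : for each v and sign, the set of x with a one-sided deviation > ε is small
  have key : ∀ (σ : ℝ), |σ| = 1 → ∀ v : V,
      (Finset.univ.filter (fun x : Fin ℓ → Bool => ε < σ * (P x v - Q v))).card ≤ 2^k := by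
    intro σ hσ v
    by_contra hcard
    push_neg at hcard
    set B := Finset.univ.filter (fun x : Fin ℓ → Bool => ε < σ * (P x v - Q v)) with hB
    have hBpos : 0 < B.card := lt_of_le_of_lt (Nat.zero_le _) hcard
    have hBcR : (0:ℝ) < (B.card : ℝ) := by exact_mod_cast hBpos
    set p : (Fin ℓ → Bool) → ℝ := fun x => if x ∈ B then (B.card : ℝ)⁻¹ else 0 with hp
    have hp0 : ∀ x, 0 ≤ p x := by
      intro x; simp only [hp]; split <;> positivity
    have hps : (∑ x, p x) = 1 := by
      simp only [hp]
      rw [Finset.sum_ite_mem, Finset.univ_inter, Finset.sum_const, nsmul_eq_mul]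
      field_simp
    have hpb : ∀ x, p x ≤ ((2:ℝ)^k)⁻¹ := by
      intro x
      simp only [hp]
      split
      · apply inv_anti₀ (by positivity)
        exact_mod_cast hcard.le
      · positivity
    have hTV := hExt p hp0 hps hpb
    -- the output distribution
    set q : (Fin s → Bool) → ℝ :=
      fun z => ∑ x, ∑ y : Fin d → Bool, p x * (if Ext x y = z then ((2:ℝ)^d)⁻¹ else 0) with hq
    have h2s : ((2:ℝ)^s) ≠ 0 := by positivity
    have h2d : ((2:ℝ)^d) ≠ 0 := by positivity
    have hqsum : ∑ z, q z = 1 := by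
      simp only [hq]
      rw [Finset.sum_comm]
      have hstep : ∀ x : Fin ℓ → Bool,
          (∑ z : Fin s → Bool, ∑ y : Fin d → Bool,
            p x * (if Ext x y = z then ((2:ℝ)^d)⁻¹ else 0)) = p x := by
        intro x
        rw [Finset.sum_comm]
        have h1 : ∀ y : Fin d → Bool,
            (∑ z : Fin s → Bool, p x * (if Ext x y = z then ((2:ℝ)^d)⁻¹ else 0))
              = p x * ((2:ℝ)^d)⁻¹ := by
          intro y
          rw [← Finset.mul_sum]
          congr 1
          simp [Finset.sum_ite_eq]
        rw [Finset.sum_congr rfl (fun y _ => h1 y), Finset.sum_const, Finset.card_univ, nsmul_eq_mul]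
        have hcd : (Fintype.card (Fin d → Bool) : ℝ) = 2^d := by
          rw [Fintype.card_fun]; push_cast; simp
        rw [hcd]; field_simp
      rw [Finset.sum_congr rfl (fun x _ => hstep x), hps]
    have husum : ∑ _z : Fin s → Bool, ((2:ℝ)^s)⁻¹ = 1 := by
      rw [Finset.sum_const, Finset.card_univ, nsmul_eq_mul]
      have hcs : (Fintype.card (Fin s → Bool) : ℝ) = 2^s := by
        rw [Fintype.card_fun]; push_cast; simp
      rw [hcs]
      exact mul_inv_cancel₀ h2s
    -- mass of the fiber f⁻¹(v)
    set A : Finset (Fin s → Bool) := Finset.univ.filter (fun z => f z = v) with hA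
    have hqA : ∑ z ∈ A, q z = ∑ x, p x * P x v := by
      simp only [hq]
      rw [Finset.sum_comm]
      apply Finset.sum_congr rfl
      intro x _
      rw [Finset.sum_comm]
      simp only [hP]
      rw [Finset.mul_sum]
      apply Finset.sum_congr rfl
      intro y _
      rw [← Finset.mul_sum]
      congr 1
      rw [Finset.sum_ite_eq]
      simp [hA]
    have huA : ∑ _z ∈ A, ((2:ℝ)^s)⁻¹ = Q v := by
      simp only [hQ, hA]
      rw [Finset.sum_filter]
    have hzero : ∑ z, (q z - ((2:ℝ)^s)⁻¹) = 0 := by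
      rw [Finset.sum_sub_distrib, hqsum, husum]; ring
    have hbound := stmt0_half_abs (fun z => q z - ((2:ℝ)^s)⁻¹) hzero A
    rw [Finset.sum_sub_distrib, hqA, huA] at hbound
    have hbound2 : |(∑ x, p x * P x v) - Q v| ≤ ε := le_trans hbound hTV
    -- but the average deviation over B exceeds ε
    have hQsplit : ∑ x, p x * Q v = Q v := by
      rw [← Finset.sum_mul, hps, one_mul]
    have h1 : ∑ x, p x * (σ * (P x v - Q v)) = σ * ((∑ x, p x * P x v) - Q v) := by
      conv_rhs => rw [← hQsplit]
      rw [← Finset.sum_sub_distrib, Finset.mul_sum]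
      apply Finset.sum_congr rfl
      intro x _; ring
    have h2 : ∑ x, p x * (σ * (P x v - Q v))
        = ∑ x ∈ B, (B.card : ℝ)⁻¹ * (σ * (P x v - Q v)) := by
      rw [← Finset.sum_subset (Finset.subset_univ B) (fun x _ hx => by simp [hp, hx])]
      apply Finset.sum_congr rfl
      intro x hx
      simp [hp, hx]
    have hgt : ε < ∑ x ∈ B, (B.card : ℝ)⁻¹ * (σ * (P x v - Q v)) := by
      have hlt : ∑ x ∈ B, (B.card : ℝ)⁻¹ * ε
          < ∑ x ∈ B, (B.card : ℝ)⁻¹ * (σ * (P x v - Q v)) := by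
        apply Finset.sum_lt_sum_of_nonempty (Finset.card_pos.mp hBpos)
        intro x hx
        have hxB : ε < σ * (P x v - Q v) := (Finset.mem_filter.mp hx).2
        exact (mul_lt_mul_iff_right₀ (inv_pos.mpr hBcR)).mpr hxB
      calc ε = ∑ _x ∈ B, (B.card : ℝ)⁻¹ * ε := by
              rw [Finset.sum_const, nsmul_eq_mul, ← mul_assoc, mul_inv_cancel₀ (ne_of_gt hBcR), one_mul]
        _ < _ := hlt
    have hfinal : ε < |(∑ x, p x * P x v) - Q v| := by
      rw [← h2, h1] at hgt
      calc ε < σ * ((∑ x, p x * P x v) - Q v) := hgt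
        _ ≤ |σ * ((∑ x, p x * P x v) - Q v)| := le_abs_self _
        _ = |(∑ x, p x * P x v) - Q v| := by rw [abs_mul, hσ, one_mul]
    exact absurd hbound2 (not_le.mpr hfinal)
  -- now the counting argument
  have hcard_eq : Nat.card {x : Fin ℓ → Bool //
      ¬ ((1/2) * ∑ v : V, |Q v - P x v| ≤ ε * (Fintype.card V) / 2)}
      = (Finset.univ.filter (fun x : Fin ℓ → Bool =>
          ¬ ((1/2) * ∑ v : V, |Q v - P x v| ≤ ε * (Fintype.card V) / 2))).card := by
    rw [Nat.card_eq_fintype_card, Fintype.card_subtype]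
  rw [show (fun x : Fin ℓ → Bool =>
      ¬ ((1/2) * ∑ v : V,
        |(∑ u : Fin s → Bool, if f u = v then ((2:ℝ)^s)⁻¹ else 0)
          - (∑ y : Fin d → Bool, if f (Ext x y) = v then ((2:ℝ)^d)⁻¹ else 0)|
          ≤ ε * (Fintype.card V) / 2)) = (fun x : Fin ℓ → Bool =>
      ¬ ((1/2) * ∑ v : V, |Q v - P x v| ≤ ε * (Fintype.card V) / 2)) from rfl]
  rw [hcard_eq]
  have hsubset : (Finset.univ.filter (fun x : Fin ℓ → Bool =>
        ¬ ((1/2) * ∑ v : V, |Q v - P x v| ≤ ε * (Fintype.card V) / 2)))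
      ⊆ Finset.univ.biUnion (fun v : V =>
          (Finset.univ.filter (fun x : Fin ℓ → Bool => ε < (1:ℝ) * (P x v - Q v)))
          ∪ (Finset.univ.filter (fun x : Fin ℓ → Bool => ε < (-1:ℝ) * (P x v - Q v)))) := by
    intro x hx
    have hbad := (Finset.mem_filter.mp hx).2
    have hex : ∃ v : V, ε < |P x v - Q v| := by
      by_contra hno
      push_neg at hno
      apply hbad
      have hle : ∑ v : V, |Q v - P x v| ≤ ∑ _v : V, ε := by
        apply Finset.sum_le_sum
        intro v _
        rw [abs_sub_comm]
        exact (hno v)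
      rw [Finset.sum_const, nsmul_eq_mul] at hle
      calc (1/2) * ∑ v : V, |Q v - P x v| ≤ (1/2) * ((Fintype.card V : ℝ) * ε) := by
            apply mul_le_mul_of_nonneg_left hle (by norm_num)
        _ = ε * (Fintype.card V) / 2 := by ring
    obtain ⟨v, hv⟩ := hex
    rw [Finset.mem_biUnion]
    refine ⟨v, Finset.mem_univ v, ?_⟩
    rw [Finset.mem_union, Finset.mem_filter, Finset.mem_filter]
    rcases lt_or_ge (P x v - Q v) 0 with hneg | hpos
    · right
      refine ⟨Finset.mem_univ x, ?_⟩
      rw [abs_of_neg hneg] at hv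
      linarith
    · left
      refine ⟨Finset.mem_univ x, ?_⟩
      rw [abs_of_nonneg hpos] at hv
      linarith
  calc (Finset.univ.filter (fun x : Fin ℓ → Bool =>
          ¬ ((1/2) * ∑ v : V, |Q v - P x v| ≤ ε * (Fintype.card V) / 2))).card
      ≤ (Finset.univ.biUnion (fun v : V =>
          (Finset.univ.filter (fun x : Fin ℓ → Bool => ε < (1:ℝ) * (P x v - Q v)))
          ∪ (Finset.univ.filter (fun x : Fin ℓ → Bool => ε < (-1:ℝ) * (P x v - Q v))))).card :=
        Finset.card_le_card hsubset
    _ ≤ ∑ v : V,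
          ((Finset.univ.filter (fun x : Fin ℓ → Bool => ε < (1:ℝ) * (P x v - Q v)))
          ∪ (Finset.univ.filter (fun x : Fin ℓ → Bool => ε < (-1:ℝ) * (P x v - Q v)))).card :=
        Finset.card_biUnion_le
    _ ≤ ∑ _v : V, (2^k + 2^k) := by
        apply Finset.sum_le_sum
        intro v _
        calc _ ≤ (Finset.univ.filter (fun x : Fin ℓ → Bool => ε < (1:ℝ) * (P x v - Q v))).card
              + (Finset.univ.filter (fun x : Fin ℓ → Bool => ε < (-1:ℝ) * (P x v - Q v))).card :=
              Finset.card_union_le _ _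
          _ ≤ 2^k + 2^k := by
              have ha := key 1 (by norm_num) v
              have hb := key (-1) (by norm_num) v
              omega
    _ = 2^(k+1) * Fintype.card V := by
        rw [Finset.sum_const, Finset.card_univ, smul_eq_mul]
        ring
end

section
/- If M and M' are stochastic matrices of the same size such that for each row index i the probability distributions given by row i of M and row i of M' are γ-close in total variation distance, then for every r ∈ ℕ, each row of M^r is γ·r-close in total variation distance to the corresponding row of (M')^r. -/
open Finset

lemma pow_nonneg_aux {n : ℕ} (M : Matrix (Fin n) (Fin n) ℝ)
    (hM0 : ∀ i j, 0 ≤ M i j) (r : ℕ) : ∀ i j, 0 ≤ (M^r) i j := by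
  induction r with
  | zero => intro i j; simp [Matrix.one_apply]; split <;> norm_num
  | succ r ih =>
    intro i j
    rw [pow_succ, Matrix.mul_apply]
    exact Finset.sum_nonneg fun k _ => mul_nonneg (ih i k) (hM0 k j)

lemma pow_rowsum_aux {n : ℕ} (M : Matrix (Fin n) (Fin n) ℝ)
    (hM1 : ∀ i, (∑ j, M i j) = 1) (r : ℕ) : ∀ i, (∑ j, (M^r) i j) = 1 := by
  induction r with
  | zero => intro i; simp [Matrix.one_apply]
  | succ r ih =>
    intro i
    simp only [pow_succ, Matrix.mul_apply]
    rw [Finset.sum_comm]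
    simp only [← Finset.mul_sum, hM1]
    simpa using ih i

/-- If the rows of stochastic matrices `M` and `M'` are pairwise γ-close in total
variation distance, then the rows of `M^r` and `M'^r` are γ·r-close. -/
theorem stmt_1 {n : ℕ} (M M' : Matrix (Fin n) (Fin n) ℝ) (γ : ℝ)
    (hM0 : ∀ i j, 0 ≤ M i j) (hM1 : ∀ i, (∑ j, M i j) = 1)
    (hM'0 : ∀ i j, 0 ≤ M' i j) (hM'1 : ∀ i, (∑ j, M' i j) = 1)
    (hclose : ∀ i, (1/2) * (∑ j, |M i j - M' i j|) ≤ γ) (r : ℕ) :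
    ∀ i, (1/2) * (∑ j, |(M^r) i j - (M'^r) i j|) ≤ γ * r := by
  intro i0
  have hγ : 0 ≤ γ := le_trans (by positivity) (hclose i0)
  suffices h : ∀ (r : ℕ) (i : Fin n), (∑ j, |(M^r) i j - (M'^r) i j|) ≤ 2 * γ * r by
    have := h r i0
    linarith
  intro r
  induction r with
  | zero => intro i; simp
  | succ r ih =>
    intro i
    have key : ∀ j, |(M^(r+1)) i j - (M'^(r+1)) i j| ≤
        (∑ k, |(M^r) i k - (M'^r) i k| * M k j) +
        (∑ k, (M'^r) i k * |M k j - M' k j|) := by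
      intro j
      have e : (M^(r+1)) i j - (M'^(r+1)) i j =
          (∑ k, ((M^r) i k - (M'^r) i k) * M k j) +
          (∑ k, (M'^r) i k * (M k j - M' k j)) := by
        simp only [pow_succ, Matrix.mul_apply, ← Finset.sum_add_distrib, ← Finset.sum_sub_distrib]
        exact Finset.sum_congr rfl fun k _ => by ring
      rw [e]
      refine le_trans (abs_add_le _ _) (add_le_add ?_ ?_)
      · refine le_trans (Finset.abs_sum_le_sum_abs _ _) (Finset.sum_le_sum fun k _ => ?_)
        rw [abs_mul, abs_of_nonneg (hM0 k j)]
      · refine le_trans (Finset.abs_sum_le_sum_abs _ _) (Finset.sum_le_sum fun k _ => ?_)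
        rw [abs_mul, abs_of_nonneg (pow_nonneg_aux M' hM'0 r i k)]
    calc (∑ j, |(M^(r+1)) i j - (M'^(r+1)) i j|)
        ≤ ∑ j, ((∑ k, |(M^r) i k - (M'^r) i k| * M k j) +
            (∑ k, (M'^r) i k * |M k j - M' k j|)) := Finset.sum_le_sum fun j _ => key j
      _ = (∑ k, |(M^r) i k - (M'^r) i k| * (∑ j, M k j)) +
          (∑ k, (M'^r) i k * (∑ j, |M k j - M' k j|)) := by
            rw [Finset.sum_add_distrib]
            congr 1
            · rw [Finset.sum_comm]; simp [Finset.mul_sum]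
            · rw [Finset.sum_comm]; simp [Finset.mul_sum]
      _ ≤ 2 * γ * r + 2 * γ := by
          have h1 : (∑ k, |(M^r) i k - (M'^r) i k| * (∑ j, M k j)) ≤ 2 * γ * r := by
            simp only [hM1, mul_one]; exact ih i
          have h2 : (∑ k, (M'^r) i k * (∑ j, |M k j - M' k j|)) ≤ 2 * γ := by
            calc (∑ k, (M'^r) i k * (∑ j, |M k j - M' k j|))
                ≤ ∑ k, (M'^r) i k * (2 * γ) := by
                  refine Finset.sum_le_sum fun k _ => ?_
                  exact mul_le_mul_of_nonneg_left (by linarith [hclose k])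
                    (pow_nonneg_aux M' hM'0 r i k)
              _ = 2 * γ := by rw [← Finset.sum_mul, pow_rowsum_aux M' hM'1 r i, one_mul]
          linarith
      _ = 2 * γ * (r + 1 : ℕ) := by push_cast; ring
end

section
/- Consider an S-R branching program P on {0,1}^n × {0,1}^m with sequential input access: along any computation path, consecutive queried input positions differ by at most 1. Partition the input positions into three contiguous blocks of sizes n_1, n_2, n_3 (each ≥ ⌊n/3⌋). Then the number of times a computation path of query complexity T transitions between querying a position in the first block and querying a position in the third block (in either order, with the other block queried in between) is at most T/n_2. Consequently P can be simulated by a 3-party NOF communication protocol (with the random string public) using O(T·S/n) bits of communication, where 2^S bounds the number of vertices of P. -/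
/-- A deterministic 3-party number-on-forehead protocol with `c` bits of
communication (transcript/cylinder-intersection formulation). -/
def IsNOF3 {X1 X2 X3 : Type} (c : ℕ) (prot : X1 → X2 → X3 → Bool) : Prop :=
  ∃ (τ : X1 → X2 → X3 → Fin (2^c)) (out : Fin (2^c) → Bool),
    (∀ x1 x2 x3, prot x1 x2 x3 = out (τ x1 x2 x3)) ∧
    ∀ t : Fin (2^c), ∃ (A : X2 → X3 → Prop) (B : X1 → X3 → Prop)
        (C : X1 → X2 → Prop),
      ∀ x1 x2 x3, τ x1 x2 x3 = t ↔ (A x2 x3 ∧ B x1 x3 ∧ C x1 x2)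

/-- An S-R randomized branching program: sequential access to the input
(consecutive queried input positions differ by at most 1) and random access to
the random string. `next v b c` is the successor upon reading input bit `b` and
random bit `c`; `Sum.inr` values are outputs at terminal vertices. -/
structure SRBP (n m : ℕ) where
  size : ℕ
  pos : Fin size → Fin n
  rnd : Fin size → Fin m
  next : Fin size → Bool → Bool → Fin size ⊕ Bool
  start : Fin size
  seq : ∀ v b c v', next v b c = Sum.inl v' →
    ((pos v' : ℤ) - (pos v : ℤ)).natAbs ≤ 1

/-- The state of the branching program after `k` steps on input `x` and random
string `y`. -/
def SRBP.state {n m : ℕ} (P : SRBP n m) (x : Fin n → Bool) (y : Fin m → Bool) :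
    ℕ → Fin P.size ⊕ Bool
  | 0 => Sum.inl P.start
  | k+1 =>
    match P.state x y k with
    | Sum.inr b => Sum.inr b
    | Sum.inl v => P.next v (x (P.pos v)) (y (P.rnd v))

/-- Gluing three input blocks into one input. -/
def glue (n1 n2 n3 : ℕ) (x1 : Fin n1 → Bool) (x2 : Fin n2 → Bool)
    (x3 : Fin n3 → Bool) : Fin (n1 + n2 + n3) → Bool := fun i =>
  if h : (i : ℕ) < n1 then x1 ⟨i, h⟩
  else if h2 : (i : ℕ) < n1 + n2 then x2 ⟨(i : ℕ) - n1, by omega⟩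
  else x3 ⟨(i : ℕ) - n1 - n2, by have := i.isLt; omega⟩

open scoped Classical

namespace SRBPproof

variable {n m : ℕ}

def stepF (P : SRBP n m) (x : Fin n → Bool) (y : Fin m → Bool) :
    Fin P.size ⊕ Bool → Fin P.size ⊕ Bool
  | Sum.inl v => P.next v (x (P.pos v)) (y (P.rnd v))
  | Sum.inr b => Sum.inr b

theorem state_zero (P : SRBP n m) (x y) : P.state x y 0 = Sum.inl P.start := rfl

theorem state_succ (P : SRBP n m) (x y) (k : ℕ) :
    P.state x y (k+1) = stepF P x y (P.state x y k) := by
  rw [SRBP.state]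
  cases P.state x y k <;> rfl

theorem state_add (P : SRBP n m) (x y) (t k : ℕ) :
    P.state x y (t + k) = (stepF P x y)^[k] (P.state x y t) := by
  induction k with
  | zero => rfl
  | succ k ih =>
    rw [← Nat.add_assoc, state_succ, ih, ← Function.iterate_succ_apply' (stepF P x y)]

theorem state_absorb (P : SRBP n m) (x y) {t t' : ℕ} (b : Bool)
    (h : P.state x y t = Sum.inr b) (ht : t ≤ t') : P.state x y t' = Sum.inr b := by
  obtain ⟨k, rfl⟩ := Nat.exists_eq_add_of_le ht
  rw [state_add, h, Function.iterate_fixed rfl]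

theorem state_inl_of_le (P : SRBP n m) (x y) {t t' : ℕ} {v : Fin P.size}
    (ht : t ≤ t') (hv : P.state x y t' = Sum.inl v) : ∃ w, P.state x y t = Sum.inl w := by
  cases h' : P.state x y t with
  | inl w => exact ⟨w, rfl⟩
  | inr b => rw [state_absorb P x y b h' ht] at hv; cases hv

def chP (P : SRBP n m) (x : Fin n → Bool) (y : Fin m → Bool) (k : ℕ) : Prop :=
  ∃ v v', P.state x y k = Sum.inl v ∧ P.state x y (k+1) = Sum.inl v' ∧ P.pos v ≠ P.pos v'

noncomputable def posZ (P : SRBP n m) : Fin P.size ⊕ Bool → ℤ :=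
  Sum.elim (fun v => ((P.pos v : ℕ) : ℤ)) (fun _ => 0)

theorem disp (P : SRBP n m) (x y) (a : ℕ) : ∀ b, a ≤ b → (∃ w, P.state x y b = Sum.inl w) →
    |posZ P (P.state x y b) - posZ P (P.state x y a)| ≤
      (((Finset.Ico a b).filter (chP P x y)).card : ℤ) := by
  intro b
  induction b with
  | zero =>
    intro hab _
    interval_cases a
    simp
  | succ b ih =>
    intro hab hw
    rcases Nat.lt_or_ge a (b+1) with h | h
    · have hab' : a ≤ b := Nat.lt_succ_iff.mp h
      obtain ⟨w, hw⟩ := hw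
      obtain ⟨u, hu⟩ := state_inl_of_le P x y (Nat.le_succ b) hw
      have key := state_succ P x y b
      rw [hu] at key
      have hnext : P.next u (x (P.pos u)) (y (P.rnd u)) = Sum.inl w := by
        rw [← hw, key]; rfl
      have hseq := P.seq u _ _ w hnext
      have ihb := ih hab' ⟨u, hu⟩
      by_cases hch : P.pos u = P.pos w
      · have hcard : (((Finset.Ico a b).filter (chP P x y)).card : ℤ) ≤
            (((Finset.Ico a (b+1)).filter (chP P x y)).card : ℤ) := by
          exact_mod_cast Finset.card_le_card
            (Finset.filter_subset_filter _ (Finset.Ico_subset_Ico le_rfl (Nat.le_succ b)))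
        have : posZ P (P.state x y (b+1)) = posZ P (P.state x y b) := by
          rw [hw, hu]; simp [posZ, hch]
        rw [this]
        exact le_trans ihb hcard
      · have hcb : chP P x y b := ⟨u, w, hu, hw, hch⟩
        have hico : (Finset.Ico a (b+1)) = insert b (Finset.Ico a b) := by
          rw [Nat.Ico_succ_right_eq_insert_Ico hab']
        have hcard : ((Finset.Ico a (b+1)).filter (chP P x y)).card =
            ((Finset.Ico a b).filter (chP P x y)).card + 1 := by
          rw [hico, Finset.filter_insert, if_pos hcb,
            Finset.card_insert_of_notMem (by simp)]
        have h1 : |posZ P (P.state x y (b+1)) - posZ P (P.state x y b)| ≤ 1 := by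
          rw [hw, hu]
          simp only [posZ, Sum.elim_inl]
          rw [Int.abs_eq_natAbs]
          exact_mod_cast hseq
        have tri := abs_sub_le (posZ P (P.state x y (b+1))) (posZ P (P.state x y b))
          (posZ P (P.state x y a))
        rw [hcard]
        push_cast
        linarith
    · have : a = b + 1 := by omega
      subst this
      simp

theorem crossL {n1 n2 : ℕ} (hn2 : 0 < n2) (P : SRBP n m) (x y) (T K : ℕ)
    (hK : ∃ bb, P.state x y K = Sum.inr bb)
    (hq : Nat.card {k : ℕ // chP P x y k} + 1 ≤ T)
    (r : ℕ) (s : ℕ → ℕ) (vs : ℕ → Fin P.size) (par : Bool)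
    (hs : StrictMono s)
    (hst : ∀ i ≤ r, P.state x y (s i) = Sum.inl (vs i))
    (hpat : ∀ i ≤ r, if (decide (i % 2 = 0)) = par then (P.pos (vs i) : ℕ) < n1
      else n1 + n2 ≤ (P.pos (vs i) : ℕ)) :
    r ≤ T / n2 := by
  obtain ⟨bb, hbb⟩ := hK
  have hlt : ∀ k, chP P x y k → k < K := by
    intro k hc
    rcases hc with ⟨v, _, hv, _, _⟩
    by_contra h
    rw [state_absorb P x y bb hbb (le_of_not_gt h)] at hv
    cases hv
  have hcard : Nat.card {k : ℕ // chP P x y k} =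
      ((Finset.range K).filter (chP P x y)).card := by
    have hset : {k | chP P x y k} = ↑((Finset.range K).filter (chP P x y)) := by
      ext k
      simp only [Finset.coe_filter, Finset.mem_range, Set.mem_setOf_eq]
      exact ⟨fun h => ⟨hlt k h, h⟩, fun h => h.2⟩
    calc Nat.card {k : ℕ // chP P x y k} = Set.ncard {k | chP P x y k} :=
          (Nat.card_coe_set_eq _)
      _ = _ := by rw [hset, Set.ncard_coe_finset]
  have main : ∀ j, j ≤ r → j * n2 ≤ ((Finset.Ico (s 0) (s j)).filter (chP P x y)).card := by
    intro j
    induction j with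
    | zero => intro _; simp
    | succ j ih =>
      intro hj
      have hj' : j ≤ r := by omega
      have h1 := ih hj'
      have hs01 : s 0 ≤ s j := hs.monotone (Nat.zero_le j)
      have hsj : s j ≤ s (j+1) := le_of_lt (hs (Nat.lt_succ_self j))
      have hcut : Finset.Ico (s 0) (s j) ∪ Finset.Ico (s j) (s (j+1)) =
          Finset.Ico (s 0) (s (j+1)) := Finset.Ico_union_Ico_eq_Ico hs01 hsj
      have hdisj : Disjoint ((Finset.Ico (s 0) (s j)).filter (chP P x y))
          ((Finset.Ico (s j) (s (j+1))).filter (chP P x y)) :=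
        Finset.disjoint_filter_filter (Finset.Ico_disjoint_Ico_consecutive _ _ _)
      have h2 : n2 ≤ ((Finset.Ico (s j) (s (j+1))).filter (chP P x y)).card := by
        have hd := disp P x y (s j) (s (j+1)) hsj ⟨vs (j+1), hst (j+1) hj⟩
        rw [hst j hj', hst (j+1) hj] at hd
        simp only [posZ, Sum.elim_inl] at hd
        have hp1 := hpat j hj'
        have hp2 := hpat (j+1) hj
        have hpar : decide ((j+1) % 2 = 0) = !decide (j % 2 = 0) := by
          rcases Nat.mod_two_eq_zero_or_one j with h | h <;> simp [Nat.add_mod, h]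
        have habs : (n2 : ℤ) ≤ |((P.pos (vs (j+1)) : ℕ) : ℤ) - ((P.pos (vs j) : ℕ) : ℤ)| := by
          by_cases hc : decide (j % 2 = 0) = par
          · rw [if_pos hc] at hp1
            rw [if_neg (by rw [hpar, hc]; cases par <;> simp)] at hp2
            have : (n2 : ℤ) ≤ ((P.pos (vs (j+1)) : ℕ) : ℤ) - ((P.pos (vs j) : ℕ) : ℤ) := by
              omega
            exact this.trans (le_abs_self _)
          · rw [if_neg hc] at hp1
            rw [if_pos (by rw [hpar]; cases par <;> cases hd2 : decide (j % 2 = 0) <;>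
              simp_all)] at hp2
            have : (n2 : ℤ) ≤ ((P.pos (vs j) : ℕ) : ℤ) - ((P.pos (vs (j+1)) : ℕ) : ℤ) := by
              omega
            rw [abs_sub_comm]
            exact this.trans (le_abs_self _)
        exact_mod_cast le_trans habs hd
      calc (j+1) * n2 = j * n2 + n2 := by ring
        _ ≤ ((Finset.Ico (s 0) (s j)).filter (chP P x y)).card +
            ((Finset.Ico (s j) (s (j+1))).filter (chP P x y)).card := add_le_add h1 h2
        _ = _ := by rw [← Finset.card_union_of_disjoint hdisj, ← Finset.filter_union, hcut]
  have hsub : ((Finset.Ico (s 0) (s r)).filter (chP P x y)) ⊆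
      ((Finset.range K).filter (chP P x y)) := by
    intro k hk
    simp only [Finset.mem_filter, Finset.mem_range, Finset.mem_Ico] at hk ⊢
    exact ⟨hlt k hk.2, hk.2⟩
  have hfin := le_trans (main r le_rfl) (Finset.card_le_card hsub)
  rw [Nat.le_div_iff_mul_le hn2]
  omega


/-! ### Part 2 infrastructure -/

def exitP (a b : ℕ) (P : SRBP n m) (o : Bool) : Fin P.size ⊕ Bool → Prop
  | Sum.inl w => if o then b ≤ (P.pos w : ℕ) else (P.pos w : ℕ) < a
  | Sum.inr _ => True

noncomputable def seg (a b : ℕ) (P : SRBP n m) (y : Fin m → Bool) (o : Bool)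
    (x : Fin n → Bool) (v : Fin P.size ⊕ Bool) : Fin P.size ⊕ Bool :=
  if h : ∃ k, exitP a b P o ((stepF P x y)^[k] v) then (stepF P x y)^[Nat.find h] v
  else Sum.inr false

def own (o0 : Bool) (i : ℕ) : Bool := if i % 2 = 0 then o0 else !o0

theorem own_succ (o0 : Bool) (i : ℕ) : own o0 (i+1) = !(own o0 i) := by
  rcases Nat.mod_two_eq_zero_or_one i with h | h <;>
    simp [own, Nat.add_mod, h]

noncomputable def chain (a b : ℕ) (P : SRBP n m) (y : Fin m → Bool) (o0 : Bool)
    (xC xA : Fin n → Bool) : ℕ → Fin P.size ⊕ Bool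
  | 0 => Sum.inl P.start
  | i+1 => seg a b P y (own o0 i) (if own o0 i then xC else xA)
      (chain a b P y o0 xC xA i)

noncomputable def ti (a b : ℕ) (P : SRBP n m) (y : Fin m → Bool) (o0 : Bool)
    (x : Fin n → Bool) : ℕ → ℕ
  | 0 => 0
  | i+1 => ti a b P y o0 x i +
      (if h : ∃ k, 0 < k ∧ exitP a b P (own o0 i)
          (P.state x y (ti a b P y o0 x i + k)) then Nat.find h else 1)

theorem exitP_inr (a b : ℕ) (P : SRBP n m) (o : Bool) (bb : Bool) :
    exitP a b P o (Sum.inr bb) := trivial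

theorem exitP_inl_true {a b : ℕ} (P : SRBP n m) (w : Fin P.size) :
    exitP a b P true (Sum.inl w) ↔ b ≤ (P.pos w : ℕ) := by simp [exitP]

theorem exitP_inl_false {a b : ℕ} (P : SRBP n m) (w : Fin P.size) :
    exitP a b P false (Sum.inl w) ↔ (P.pos w : ℕ) < a := by simp [exitP]

theorem seg_inr (a b : ℕ) (P : SRBP n m) (y o x) (bb : Bool) :
    seg a b P y o x (Sum.inr bb) = Sum.inr bb := by
  have h : ∃ k, exitP a b P o ((stepF P x y)^[k] (Sum.inr bb)) := ⟨0, trivial⟩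
  rw [seg, dif_pos h]
  have h0 : Nat.find h = 0 := by rw [Nat.find_eq_zero]; trivial
  rw [h0]; rfl

theorem seg_exit {a b : ℕ} {P : SRBP n m} {y o x} {v : Fin P.size ⊕ Bool} {w : Fin P.size}
    (h : seg a b P y o x v = Sum.inl w) : exitP a b P o (Sum.inl w) := by
  rw [seg] at h
  split at h
  · next hex => rw [← h]; exact Nat.find_spec hex
  · cases h

theorem ti_succ_ge (a b : ℕ) (P : SRBP n m) (y o0 x) (i : ℕ) :
    ti a b P y o0 x i + 1 ≤ ti a b P y o0 x (i+1) := by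
  rw [ti]
  split
  · next h => have := (Nat.find_spec h).1; omega
  · omega

theorem ti_mono (a b : ℕ) (P : SRBP n m) (y o0 x) :
    StrictMono (ti a b P y o0 x) := by
  apply strictMono_nat_of_lt_succ
  intro i
  have := ti_succ_ge a b P y o0 x i
  omega

theorem exit_flip {a b : ℕ} (hab : a ≤ b) (P : SRBP n m) {o : Bool} (w : Fin P.size)
    (h : exitP a b P o (Sum.inl w)) : ¬ exitP a b P (!o) (Sum.inl w) := by
  cases o <;> simp only [exitP, Bool.not_true, Bool.not_false, if_true, if_false,
    Bool.false_eq_true, Bool.true_eq_false] at h ⊢ <;> omega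

/-- Main lemma relating the true chain (both seg inputs equal to the real `x`)
to the computation path, with the turn-start non-exit invariant. -/
theorem tc_main {a b : ℕ} (hab : a ≤ b) (P : SRBP n m) (x y) {K : ℕ} {bK : Bool}
    (hterm : P.state x y K = Sum.inr bK)
    (ho0 : ∀ v, P.state x y 0 = Sum.inl v → ¬ exitP a b P (own (decide ((P.pos P.start : ℕ) < b)) 0) (Sum.inl v)) :
    ∀ i, chain a b P y (decide ((P.pos P.start : ℕ) < b)) x x i
        = P.state x y (ti a b P y (decide ((P.pos P.start : ℕ) < b)) x i) ∧
      (∀ v, chain a b P y (decide ((P.pos P.start : ℕ) < b)) x x i = Sum.inl v →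
        ¬ exitP a b P (own (decide ((P.pos P.start : ℕ) < b)) i) (Sum.inl v)) := by
  set o0 := decide ((P.pos P.start : ℕ) < b) with ho0def
  intro i
  induction i with
  | zero => exact ⟨rfl, ho0⟩
  | succ i ih =>
    obtain ⟨hst, hinv⟩ := ih
    cases hSi : chain a b P y o0 x x i with
    | inr bb =>
      have hch : chain a b P y o0 x x (i+1) = Sum.inr bb := by
        rw [chain, hSi, seg_inr]
      have hstbb : P.state x y (ti a b P y o0 x i) = Sum.inr bb := by rw [← hst, hSi]
      refine ⟨?_, ?_⟩
      · rw [hch, state_absorb P x y bb hstbb ((ti_mono a b P y o0 x).le_iff_le.mpr (Nat.le_succ i))]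
      · intro v hv; rw [hch] at hv; cases hv
    | inl v =>
      have hnx : ¬ exitP a b P (own o0 i) (Sum.inl v) := hinv v hSi
      have hstv : P.state x y (ti a b P y o0 x i) = Sum.inl v := by rw [← hst, hSi]
      have hex : ∃ k, exitP a b P (own o0 i) ((stepF P x y)^[k] (Sum.inl v)) := by
        rcases le_or_gt (ti a b P y o0 x i) K with h | h
        · refine ⟨K - ti a b P y o0 x i, ?_⟩
          have : (stepF P x y)^[K - ti a b P y o0 x i] (Sum.inl v) = P.state x y K := by
            rw [← hstv, ← state_add]
            congr 1
            omega
          rw [this, hterm]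
          trivial
        · exfalso
          rw [state_absorb P x y bK hterm (le_of_lt h)] at hstv
          cases hstv
      have hchain : chain a b P y o0 x x (i+1) = (stepF P x y)^[Nat.find hex] (Sum.inl v) := by
        rw [chain, hSi, ite_self, seg, dif_pos hex]
      have kpos : 0 < Nat.find hex := by
        rcases Nat.eq_zero_or_pos (Nat.find hex) with h0 | h0
        · exfalso; apply hnx
          have := Nat.find_spec hex
          rwa [h0] at this
        · exact h0
      have hiter : ∀ k, (stepF P x y)^[k] (Sum.inl v) = P.state x y (ti a b P y o0 x i + k) := by
        intro k; rw [state_add, hstv]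
      have hex2 : ∃ k, 0 < k ∧ exitP a b P (own o0 i)
          (P.state x y (ti a b P y o0 x i + k)) := by
        refine ⟨Nat.find hex, kpos, ?_⟩
        rw [← hiter]; exact Nat.find_spec hex
      have hfeq : Nat.find hex2 = Nat.find hex := by
        apply le_antisymm
        · exact Nat.find_min' hex2 ⟨kpos, by rw [← hiter]; exact Nat.find_spec hex⟩
        · apply Nat.find_min' hex
          rw [hiter]
          exact (Nat.find_spec hex2).2
      have hti : ti a b P y o0 x (i+1) = ti a b P y o0 x i + Nat.find hex := by
        rw [ti, dif_pos hex2, hfeq]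
      refine ⟨?_, ?_⟩
      · rw [hchain, hti, hiter]
      · intro w hw
        have hexit : exitP a b P (own o0 i) (Sum.inl w) := by
          rw [hchain] at hw
          rw [← hw]
          exact Nat.find_spec hex
        rw [own_succ]
        exact exit_flip hab P w hexit

theorem seg_congr {a b : ℕ} {P : SRBP n m} {y : Fin m → Bool} {o : Bool}
    {x x' : Fin n → Bool}
    (hag : ∀ s, ¬ exitP a b P o s → stepF P x y s = stepF P x' y s)
    (v : Fin P.size ⊕ Bool)
    (hx : ∃ k, exitP a b P o ((stepF P x y)^[k] v)) :
    seg a b P y o x' v = seg a b P y o x v := by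
  have itereq : ∀ j, j ≤ Nat.find hx → (stepF P x' y)^[j] v = (stepF P x y)^[j] v := by
    intro j
    induction j with
    | zero => intro _; rfl
    | succ j ih =>
      intro hj
      rw [Function.iterate_succ_apply', Function.iterate_succ_apply', ih (by omega)]
      exact (hag _ (Nat.find_min hx (by omega))).symm
  have hx' : ∃ k, exitP a b P o ((stepF P x' y)^[k] v) :=
    ⟨Nat.find hx, by rw [itereq _ le_rfl]; exact Nat.find_spec hx⟩
  have hfeq : Nat.find hx' = Nat.find hx := by
    apply le_antisymm
    · exact Nat.find_min' hx' (by rw [itereq _ le_rfl]; exact Nat.find_spec hx)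
    · by_contra hlt
      push_neg at hlt
      apply Nat.find_min hx hlt
      rw [← itereq _ (le_of_lt hlt)]
      exact Nat.find_spec hx'
  rw [seg, seg, dif_pos hx, dif_pos hx', hfeq, itereq _ le_rfl]

/-- padding vertex for slot `i` -/
noncomputable def padv (a b : ℕ) (P : SRBP n m) (o0 : Bool) (i : ℕ) : Fin P.size :=
  if h : ∃ v : Fin P.size, ¬ exitP a b P (own o0 i) (Sum.inl v) then h.choose else P.start

theorem padv_spec {a b : ℕ} {P : SRBP n m} {o0 : Bool} {i : ℕ} (w : Fin P.size)
    (hw : ¬ exitP a b P (own o0 i) (Sum.inl w)) :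
    ¬ exitP a b P (own o0 i) (Sum.inl (padv a b P o0 i)) := by
  rw [padv, dif_pos ⟨w, hw⟩]
  exact (⟨w, hw⟩ : ∃ v : Fin P.size, ¬ exitP a b P (own o0 i) (Sum.inl v)).choose_spec

noncomputable def slotF (a b : ℕ) (P : SRBP n m) (o0 : Bool) {S H : ℕ}
    (hsz : P.size ≤ 2^S) (ch : ℕ → Fin P.size ⊕ Bool) (i : Fin H) : Fin (2^S) :=
  if h : ∃ v, ch ((i : ℕ)+1) = Sum.inl v then
    ⟨h.choose.1, lt_of_lt_of_le h.choose.2 hsz⟩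
  else if h2 : ∃ v, ch (i : ℕ) = Sum.inl v then
    ⟨(padv a b P o0 i).1, lt_of_lt_of_le (padv a b P o0 i).2 hsz⟩
  else ⟨P.start.1, lt_of_lt_of_le P.start.2 hsz⟩

noncomputable def outbF (P : SRBP n m) (H : ℕ) (ch : ℕ → Fin P.size ⊕ Bool) : Bool :=
  if h : ∃ bb, ch (H+1) = Sum.inr bb then h.choose else false

/-! ### glue agreement -/

theorem glue_lo {n1 n2 n3 : ℕ} (x1 : Fin n1 → Bool) (x2 : Fin n2 → Bool)
    (x3 x3' : Fin n3 → Bool) (i : Fin (n1+n2+n3)) (h : (i : ℕ) < n1 + n2) :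
    glue n1 n2 n3 x1 x2 x3 i = glue n1 n2 n3 x1 x2 x3' i := by
  unfold glue
  split_ifs <;> first | rfl | omega

theorem glue_hi {n1 n2 n3 : ℕ} (x1 x1' : Fin n1 → Bool) (x2 : Fin n2 → Bool)
    (x3 : Fin n3 → Bool) (i : Fin (n1+n2+n3)) (h : n1 ≤ (i : ℕ)) :
    glue n1 n2 n3 x1 x2 x3 i = glue n1 n2 n3 x1' x2 x3 i := by
  unfold glue
  split_ifs <;> first | rfl | omega

/-! ### the protocol chain -/

noncomputable def pch (n1 n2 n3 : ℕ) {m : ℕ} (P : SRBP (n1+n2+n3) m) (y : Fin m → Bool)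
    (x1 : Fin n1 → Bool) (x2 : Fin n2 → Bool) (x3 : Fin n3 → Bool) :
    ℕ → Fin P.size ⊕ Bool :=
  chain n1 (n1+n2) P y (decide ((P.pos P.start : ℕ) < n1+n2))
    (glue n1 n2 n3 x1 x2 (fun _ => false)) (glue n1 n2 n3 (fun _ => false) x2 x3)

theorem key {n1 n2 n3 m T : ℕ} (hn2 : 0 < n2) (P : SRBP (n1+n2+n3) m)
    (y : Fin m → Bool) (f : (Fin (n1 + n2 + n3) → Bool) → (Fin m → Bool) → Bool)
    (hf : ∀ x y, ∃ k, P.state x y k = Sum.inr (f x y))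
    (hquery : ∀ x y, Nat.card {k : ℕ // ∃ v v', P.state x y k = Sum.inl v ∧
        P.state x y (k+1) = Sum.inl v' ∧ P.pos v ≠ P.pos v'} + 1 ≤ T)
    (x1 : Fin n1 → Bool) (x2 : Fin n2 → Bool) (x3 : Fin n3 → Bool) :
    ∃ θ : ℕ, 1 ≤ θ ∧ θ ≤ T / n2 + 2 ∧
      (∀ i, i < θ → ∃ v, pch n1 n2 n3 P y x1 x2 x3 i = Sum.inl v ∧
        ¬ exitP n1 (n1+n2) P (own (decide ((P.pos P.start : ℕ) < n1+n2)) i) (Sum.inl v)) ∧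
      (∀ i, i + 1 < θ → ∃ v, pch n1 n2 n3 P y x1 x2 x3 (i+1) = Sum.inl v ∧
        exitP n1 (n1+n2) P (own (decide ((P.pos P.start : ℕ) < n1+n2)) i) (Sum.inl v)) ∧
      (∀ i, θ ≤ i → pch n1 n2 n3 P y x1 x2 x3 i = Sum.inr (f (glue n1 n2 n3 x1 x2 x3) y)) := by
  set o0 := decide ((P.pos P.start : ℕ) < n1+n2) with ho0def
  set x : Fin (n1+n2+n3) → Bool := glue n1 n2 n3 x1 x2 x3 with hxdef
  obtain ⟨K, hK⟩ := hf x y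
  have hab : n1 ≤ n1 + n2 := Nat.le_add_right _ _
  have ho0 : ∀ v, P.state x y 0 = Sum.inl v →
      ¬ exitP n1 (n1+n2) P (own o0 0) (Sum.inl v) := by
    intro v hv
    rw [state_zero] at hv
    injection hv with hv
    subst hv
    have hown : own o0 0 = o0 := rfl
    rw [hown]
    by_cases hp : (P.pos P.start : ℕ) < n1 + n2
    · have hh : o0 = true := by rw [ho0def]; exact decide_eq_true hp
      rw [hh, exitP_inl_true]
      omega
    · have hh : o0 = false := by rw [ho0def]; exact decide_eq_false hp
      rw [hh, exitP_inl_false]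
      omega
  have tc := tc_main hab P x y hK ho0
  -- existence of exits along the true path
  have hexists : ∀ (v : Fin P.size ⊕ Bool) (t : ℕ), P.state x y t = v → ∀ o : Bool,
      ∃ k, exitP n1 (n1+n2) P o ((stepF P x y)^[k] v) := by
    intro v t hv o
    rcases le_or_gt t K with h | h
    · refine ⟨K - t, ?_⟩
      have hit : (stepF P x y)^[K - t] v = P.state x y K := by
        rw [← hv, ← state_add]
        congr 1
        omega
      rw [hit, hK]
      trivial
    · have hvv : v = Sum.inr (f x y) := by
        rw [← hv]
        exact state_absorb P x y _ hK h.le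
      exact ⟨0, by rw [hvv]; trivial⟩
  -- protocol chain equals true chain
  have hcc : ∀ i, pch n1 n2 n3 P y x1 x2 x3 i = chain n1 (n1+n2) P y o0 x x i := by
    intro i
    induction i with
    | zero => rfl
    | succ i ih =>
      rw [pch] at ih ⊢
      rw [chain, chain, ih, ite_self]
      have hx : ∃ k, exitP n1 (n1+n2) P (own o0 i)
          ((stepF P x y)^[k] (chain n1 (n1+n2) P y o0 x x i)) :=
        hexists _ _ (tc i).1.symm _
      cases hoi : own o0 i
      · rw [if_neg (by simp)]
        apply seg_congr ?_ _ (hoi ▸ hx)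
        intro s hs
        cases s with
        | inr bb => rfl
        | inl w =>
          have hw : n1 ≤ (P.pos w : ℕ) := by
            simp only [exitP, if_false, Bool.false_eq_true, not_lt] at hs
            exact hs
          simp only [stepF]
          rw [hxdef, glue_hi x1 (fun _ => false) x2 x3 _ hw]
      · rw [if_pos rfl]
        apply seg_congr ?_ _ (hoi ▸ hx)
        intro s hs
        cases s with
        | inr bb => rfl
        | inl w =>
          have hw : (P.pos w : ℕ) < n1 + n2 := by
            simp only [exitP, if_true, not_le] at hs
            exact hs
          simp only [stepF]
          rw [hxdef, glue_lo x1 x2 x3 (fun _ => false) _ hw]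
  -- termination of the true chain
  have hterm2 : ∃ i, ∃ bb : Bool, chain n1 (n1+n2) P y o0 x x i = Sum.inr bb := by
    refine ⟨K+1, f x y, ?_⟩
    rw [(tc (K+1)).1]
    exact state_absorb P x y _ hK
      (le_trans (Nat.le_succ K) ((ti_mono n1 (n1+n2) P y o0 x).le_apply))
  set θ := Nat.find hterm2 with hθdef
  have hθpos : 1 ≤ θ := by
    rcases Nat.eq_zero_or_pos θ with h0 | h0
    · exfalso
      obtain ⟨bb, hbb⟩ := Nat.find_spec hterm2
      rw [← hθdef, h0] at hbb
      cases hbb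
    · exact h0
  have hbelow : ∀ i, i < θ → ∃ v, chain n1 (n1+n2) P y o0 x x i = Sum.inl v ∧
      ¬ exitP n1 (n1+n2) P (own o0 i) (Sum.inl v) := by
    intro i hi
    cases hc : chain n1 (n1+n2) P y o0 x x i with
    | inl v => exact ⟨v, rfl, (tc i).2 v hc⟩
    | inr bb => exact absurd ⟨bb, hc⟩ (Nat.find_min hterm2 hi)
  have hmsg : ∀ i, i + 1 < θ → ∃ v, chain n1 (n1+n2) P y o0 x x (i+1) = Sum.inl v ∧
      exitP n1 (n1+n2) P (own o0 i) (Sum.inl v) := by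
    intro i hi
    obtain ⟨v, hv, _⟩ := hbelow (i+1) hi
    refine ⟨v, hv, ?_⟩
    rw [chain] at hv
    exact seg_exit hv
  -- value at termination
  obtain ⟨bθ, hbθ⟩ := Nat.find_spec hterm2
  have hbθval : bθ = f x y := by
    have h1 : P.state x y (ti n1 (n1+n2) P y o0 x θ) = Sum.inr bθ := by
      rw [← (tc θ).1]; exact hbθ
    rcases le_total (ti n1 (n1+n2) P y o0 x θ) K with h | h
    · exact Sum.inr.inj ((state_absorb P x y bθ h1 h).symm.trans hK)
    · exact (Sum.inr.inj ((state_absorb P x y (f x y) hK h).symm.trans h1)).symm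
  have habs : ∀ i, θ ≤ i → chain n1 (n1+n2) P y o0 x x i = Sum.inr (f x y) := by
    intro i hi
    obtain ⟨j, rfl⟩ := Nat.exists_eq_add_of_le hi
    induction j with
    | zero => rw [← hbθval]; exact hbθ
    | succ j ih =>
      rw [← Nat.add_assoc, chain, ih (by omega), seg_inr]
  -- crossing bound
  have hcross : θ ≤ T / n2 + 2 := by
    by_cases hθ2 : θ ≤ 2
    · exact le_trans hθ2 (Nat.le_add_left 2 _)
    · push_neg at hθ2
      have hr : θ - 2 ≤ T / n2 := by
        apply crossL hn2 P x y T K ⟨f x y, hK⟩ (hquery x y) (θ - 2)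
          (fun i => ti n1 (n1+n2) P y o0 x (i+1))
          (fun i => Sum.elim id (fun _ => P.start) (chain n1 (n1+n2) P y o0 x x (i+1)))
          (!o0)
        · intro i j hij
          exact ti_mono n1 (n1+n2) P y o0 x (by omega)
        · intro i hi
          obtain ⟨v, hv, _⟩ := hbelow (i+1) (by omega)
          rw [hv]
          simp only [Sum.elim_inl, id]
          rw [← (tc (i+1)).1, hv]
        · intro i hi
          obtain ⟨v, hv, hex⟩ := hmsg i (by omega)
          rw [hv]
          simp only [Sum.elim_inl, id]
          have hexval : (own o0 i = true → n1 + n2 ≤ (P.pos v : ℕ)) ∧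
              (own o0 i = false → (P.pos v : ℕ) < n1) := by
            constructor <;> intro ho <;> rw [ho] at hex
            · exact (exitP_inl_true P v).mp hex
            · exact (exitP_inl_false P v).mp hex
          rcases Nat.mod_two_eq_zero_or_one i with h2 | h2 <;> cases ho' : o0
          · rw [if_pos (by simp [h2, ho'])]
            exact hexval.2 (by simp [own, h2, ho'])
          · rw [if_neg (by simp [h2, ho'])]
            exact hexval.1 (by simp [own, h2, ho'])
          · rw [if_neg (by simp [h2, ho'])]
            exact hexval.1 (by simp [own, h2, ho'])
          · rw [if_pos (by simp [h2, ho'])]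
            exact hexval.2 (by simp [own, h2, ho'])
      omega
  refine ⟨θ, hθpos, hcross, ?_, ?_, ?_⟩
  · intro i hi
    rw [hcc i]
    exact hbelow i hi
  · intro i hi
    rw [hcc (i+1)]
    exact hmsg i hi
  · intro i hi
    rw [hcc i]
    exact habs i hi

theorem outbF_eq {P : SRBP n m} {H : ℕ} {ch : ℕ → Fin P.size ⊕ Bool} {bb : Bool}
    (h : ch (H+1) = Sum.inr bb) : outbF P H ch = bb := by
  have hex : ∃ b', ch (H+1) = Sum.inr b' := ⟨bb, h⟩
  rw [outbF, dif_pos hex]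
  exact Sum.inr.inj (hex.choose_spec.symm.trans h)

theorem slotF_inl {a b : ℕ} {P : SRBP n m} {o0 : Bool} {S H : ℕ} {hsz : P.size ≤ 2^S}
    {ch : ℕ → Fin P.size ⊕ Bool} {i : Fin H} {v : Fin P.size}
    (h : ch ((i : ℕ)+1) = Sum.inl v) :
    slotF a b P o0 hsz ch i = ⟨v.1, lt_of_lt_of_le v.2 hsz⟩ := by
  have hex : ∃ w, ch ((i : ℕ)+1) = Sum.inl w := ⟨v, h⟩
  rw [slotF, dif_pos hex]
  have hv : hex.choose = v := Sum.inl.inj (hex.choose_spec.symm.trans h)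
  simp only [hv]

theorem slotF_pad {a b : ℕ} {P : SRBP n m} {o0 : Bool} {S H : ℕ} {hsz : P.size ≤ 2^S}
    {ch : ℕ → Fin P.size ⊕ Bool} {i : Fin H} {w : Fin P.size}
    (hterm : ∀ v, ch ((i : ℕ)+1) ≠ Sum.inl v) (h2 : ch (i : ℕ) = Sum.inl w) :
    slotF a b P o0 hsz ch i =
      ⟨(padv a b P o0 i).1, lt_of_lt_of_le (padv a b P o0 i).2 hsz⟩ := by
  rw [slotF, dif_neg (by rintro ⟨v, hv⟩; exact hterm v hv), dif_pos ⟨w, h2⟩]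

theorem pch_succ_true {n1 n2 n3 m : ℕ} (P : SRBP (n1+n2+n3) m) (y : Fin m → Bool)
    (x1 : Fin n1 → Bool) (x2 : Fin n2 → Bool) (x3 : Fin n3 → Bool) (i : ℕ)
    (h : own (decide ((P.pos P.start : ℕ) < n1+n2)) i = true) :
    pch n1 n2 n3 P y x1 x2 x3 (i+1) =
      seg n1 (n1+n2) P y true (glue n1 n2 n3 x1 x2 (fun _ => false))
        (pch n1 n2 n3 P y x1 x2 x3 i) := by
  rw [pch, chain, h, if_pos rfl]

theorem pch_succ_false {n1 n2 n3 m : ℕ} (P : SRBP (n1+n2+n3) m) (y : Fin m → Bool)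
    (x1 : Fin n1 → Bool) (x2 : Fin n2 → Bool) (x3 : Fin n3 → Bool) (i : ℕ)
    (h : own (decide ((P.pos P.start : ℕ) < n1+n2)) i = false) :
    pch n1 n2 n3 P y x1 x2 x3 (i+1) =
      seg n1 (n1+n2) P y false (glue n1 n2 n3 (fun _ => false) x2 x3)
        (pch n1 n2 n3 P y x1 x2 x3 i) := by
  rw [pch, chain, h, if_neg (by simp)]

end SRBPproof

/-- An S-R branching program of size `≤ 2^S` and query complexity `≤ T`, with the
input split into three contiguous blocks of sizes `n1, n2, n3` (each `≥ ⌊n/3⌋`):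
(1) along any computation path, the number of alternations between querying the
first block and querying the third block is at most `T / n2`; and (2) the program
is simulated by a 3-party NOF protocol (with public random string) using
`O(T·S/n)` bits of communication. -/
theorem stmt_14 (n1 n2 n3 m S T : ℕ) (hS : 1 ≤ S) (hn2 : 0 < n2)
    (h1 : (n1 + n2 + n3) / 3 ≤ n1) (h2 : (n1 + n2 + n3) / 3 ≤ n2)
    (h3 : (n1 + n2 + n3) / 3 ≤ n3)
    (P : SRBP (n1 + n2 + n3) m) (hsize : P.size ≤ 2^S)
    (f : (Fin (n1 + n2 + n3) → Bool) → (Fin m → Bool) → Bool)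
    (hf : ∀ x y, ∃ k, P.state x y k = Sum.inr (f x y))
    -- query complexity at most T: at most T−1 steps query a new input position
    (hquery : ∀ x y, Nat.card {k : ℕ // ∃ v v', P.state x y k = Sum.inl v ∧
        P.state x y (k+1) = Sum.inl v' ∧ P.pos v ≠ P.pos v'} + 1 ≤ T) :
    -- (1) crossing bound
    (∀ (x : Fin (n1 + n2 + n3) → Bool) (y : Fin m → Bool) (r : ℕ) (s : ℕ → ℕ)
        (vs : ℕ → Fin P.size) (par : Bool),
      StrictMono s →
      (∀ i ≤ r, P.state x y (s i) = Sum.inl (vs i)) →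
      (∀ i ≤ r, if (decide (i % 2 = 0)) = par
        then (P.pos (vs i) : ℕ) < n1
        else n1 + n2 ≤ (P.pos (vs i) : ℕ)) →
      r ≤ T / n2) ∧
    -- (2) NOF simulation with O(T·S/n) communication
    ∃ (c : ℕ) (prot : (Fin m → Bool) → (Fin n1 → Bool) → (Fin n2 → Bool) →
        (Fin n3 → Bool) → Bool),
      (∀ y, IsNOF3 c (prot y)) ∧
      (∀ y x1 x2 x3, prot y x1 x2 x3 = f (glue n1 n2 n3 x1 x2 x3) y) ∧
      (c : ℝ) ≤ (S : ℝ) * ((T : ℝ) / (n2 : ℝ) + 2) := by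
  constructor
  · intro x y r s vs par hs hst hpat
    obtain ⟨K, hK⟩ := hf x y
    exact SRBPproof.crossL hn2 P x y T K ⟨f x y, hK⟩ (hquery x y) r s vs par hs hst hpat
  · refine ⟨S * (T / n2 + 1) + 1, fun y x1 x2 x3 => f (glue n1 n2 n3 x1 x2 x3) y,
      ?_, fun _ _ _ _ => rfl, ?_⟩
    · -- the NOF protocol
      intro y
      have hcard : Fintype.card ((Fin (T / n2 + 1) → Fin (2^S)) × Bool)
          = 2^(S * (T / n2 + 1) + 1) := by
        rw [Fintype.card_prod, Fintype.card_fun, Fintype.card_fin, Fintype.card_fin,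
          Fintype.card_bool]
        conv_rhs => rw [pow_succ, pow_mul]
      set Hn := T / n2 + 1 with hHdef
      set o0 := decide ((P.pos P.start : ℕ) < n1 + n2) with ho0def
      set enc := Fintype.equivFinOfCardEq hcard with hencdef
      set τ : (Fin n1 → Bool) → (Fin n2 → Bool) → (Fin n3 → Bool) → Fin (2^(S * Hn + 1)) :=
        fun z1 z2 z3 => enc
          (SRBPproof.slotF n1 (n1+n2) P o0 hsize (SRBPproof.pch n1 n2 n3 P y z1 z2 z3),
           SRBPproof.outbF P Hn (SRBPproof.pch n1 n2 n3 P y z1 z2 z3)) with hτ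
      refine ⟨τ, fun t => (enc.symm t).2, ?_, ?_⟩
      · -- correctness
        intro x1 x2 x3
        obtain ⟨θ, hθ1, hθH, hbelow, hmsg, habs⟩ := SRBPproof.key hn2 P y f hf hquery x1 x2 x3
        rw [hτ]
        simp only [Equiv.symm_apply_apply]
        exact (SRBPproof.outbF_eq (habs (Hn+1) (by omega))).symm
      · -- cylinder intersections
        intro t
        refine ⟨fun z2 z3 => ∃ z1, τ z1 z2 z3 = t, fun _ _ => True,
          fun z1 z2 => ∃ z3', τ z1 z2 z3' = t, ?_⟩
        intro x1 x2 x3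
        have rect : ∀ (x1' : Fin n1 → Bool) (x3' : Fin n3 → Bool),
            τ x1' x2 x3 = t → τ x1 x2 x3' = t → τ x1 x2 x3 = t := by
          intro x1' x3' hb1 ha1
          have heq := hb1.trans ha1.symm
          rw [hτ] at heq
          have hpair := enc.injective heq
          have hslots : SRBPproof.slotF n1 (n1+n2) P o0 hsize
                (SRBPproof.pch n1 n2 n3 P y x1' x2 x3)
              = SRBPproof.slotF n1 (n1+n2) P o0 hsize
                (SRBPproof.pch n1 n2 n3 P y x1 x2 x3') := congrArg Prod.fst hpair
          have houts : SRBPproof.outbF P Hn (SRBPproof.pch n1 n2 n3 P y x1' x2 x3)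
              = SRBPproof.outbF P Hn (SRBPproof.pch n1 n2 n3 P y x1 x2 x3') :=
            congrArg Prod.snd hpair
          obtain ⟨θb, hbpos, hbH, hb_below, hb_msg, hb_abs⟩ :=
            SRBPproof.key hn2 P y f hf hquery x1' x2 x3
          obtain ⟨θa, hapos, haH, ha_below, ha_msg, ha_abs⟩ :=
            SRBPproof.key hn2 P y f hf hquery x1 x2 x3'
          have contra : ∀ (θ1 θ2 : ℕ) (ch1 ch2 : ℕ → Fin P.size ⊕ Bool),
              1 ≤ θ1 → (∃ bb, ch1 θ1 = Sum.inr bb) →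
              (∀ i, i < θ1 → ∃ v, ch1 i = Sum.inl v ∧
                ¬ SRBPproof.exitP n1 (n1+n2) P (SRBPproof.own o0 i) (Sum.inl v)) →
              (∀ i, i + 1 < θ2 → ∃ v, ch2 (i+1) = Sum.inl v ∧
                SRBPproof.exitP n1 (n1+n2) P (SRBPproof.own o0 i) (Sum.inl v)) →
              SRBPproof.slotF n1 (n1+n2) P o0 (H := Hn) hsize ch1
                = SRBPproof.slotF n1 (n1+n2) P o0 (H := Hn) hsize ch2 →
              θ1 < θ2 → θ2 ≤ Hn + 1 → False := by
            intro θ1 θ2 ch1 ch2 hpos hterm hbel hmsg2 hsl hlt hle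
            have hjH : θ1 - 1 < Hn := by omega
            obtain ⟨v0, hv0, hv0x⟩ := hbel (θ1 - 1) (by omega)
            obtain ⟨bb, hbb⟩ := hterm
            have hj1 : (θ1 - 1) + 1 = θ1 := by omega
            have e1 : SRBPproof.slotF n1 (n1+n2) P o0 hsize ch1 ⟨θ1 - 1, hjH⟩ =
                ⟨(SRBPproof.padv n1 (n1+n2) P o0 (θ1-1)).1,
                  lt_of_lt_of_le (SRBPproof.padv n1 (n1+n2) P o0 (θ1-1)).2 hsize⟩ := by
              apply SRBPproof.slotF_pad
              · intro v hv
                rw [show ((⟨θ1 - 1, hjH⟩ : Fin Hn) : ℕ) + 1 = θ1 from hj1, hbb] at hv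
                cases hv
              · exact hv0
            obtain ⟨w, hw, hwx⟩ := hmsg2 (θ1 - 1) (by omega)
            have e2 : SRBPproof.slotF n1 (n1+n2) P o0 hsize ch2 ⟨θ1 - 1, hjH⟩ =
                ⟨w.1, lt_of_lt_of_le w.2 hsize⟩ := SRBPproof.slotF_inl hw
            have hsv := congrFun hsl (⟨θ1 - 1, hjH⟩ : Fin Hn)
            rw [e1, e2] at hsv
            have hval := congrArg Fin.val hsv
            have hpw : SRBPproof.padv n1 (n1+n2) P o0 (θ1-1) = w := Fin.ext hval
            apply SRBPproof.padv_spec v0 hv0x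
            rw [hpw]
            exact hwx
          have hθeq : θb = θa := by
            rcases lt_trichotomy θb θa with h | h | h
            · exact absurd (contra θb θa _ _ hbpos ⟨_, hb_abs θb le_rfl⟩ hb_below
                ha_msg hslots h haH) (by simp)
            · exact h
            · exact absurd (contra θa θb _ _ hapos ⟨_, ha_abs θa le_rfl⟩ ha_below
                hb_msg hslots.symm h hbH) (by simp)
          have hfeq : f (glue n1 n2 n3 x1' x2 x3) y = f (glue n1 n2 n3 x1 x2 x3') y := by
            have hbv := SRBPproof.outbF_eq (hb_abs (Hn+1) (by omega))
            have hav := SRBPproof.outbF_eq (ha_abs (Hn+1) (by omega))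
            rw [← hbv, ← hav, houts]
          have hcheq : ∀ i, SRBPproof.pch n1 n2 n3 P y x1' x2 x3 i
              = SRBPproof.pch n1 n2 n3 P y x1 x2 x3' i := by
            intro i
            rcases Nat.lt_or_ge i θa with hi | hi
            · cases i with
              | zero => rfl
              | succ j =>
                have hjH : j < Hn := by omega
                obtain ⟨vb, hvb, _⟩ := hb_msg j (by omega)
                obtain ⟨va, hva, _⟩ := ha_msg j hi
                have eb := SRBPproof.slotF_inl (a := n1) (b := n1+n2) (o0 := o0)
                  (hsz := hsize) (i := (⟨j, hjH⟩ : Fin Hn)) hvb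
                have ea := SRBPproof.slotF_inl (a := n1) (b := n1+n2) (o0 := o0)
                  (hsz := hsize) (i := (⟨j, hjH⟩ : Fin Hn)) hva
                have hsv := congrFun hslots (⟨j, hjH⟩ : Fin Hn)
                rw [eb, ea] at hsv
                have hval := congrArg Fin.val hsv
                have hveq : vb = va := Fin.ext hval
                rw [hvb, hva, hveq]
            · rw [hb_abs i (by omega), ha_abs i hi, hfeq]
          have hfinal : ∀ i, SRBPproof.pch n1 n2 n3 P y x1 x2 x3 i
              = SRBPproof.pch n1 n2 n3 P y x1 x2 x3' i := by
            intro i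
            induction i with
            | zero => rfl
            | succ i ih =>
              cases hoi : SRBPproof.own o0 i
              · calc SRBPproof.pch n1 n2 n3 P y x1 x2 x3 (i+1)
                    = SRBPproof.seg n1 (n1+n2) P y false (glue n1 n2 n3 (fun _ => false) x2 x3)
                      (SRBPproof.pch n1 n2 n3 P y x1 x2 x3 i) :=
                      SRBPproof.pch_succ_false P y x1 x2 x3 i hoi
                  _ = SRBPproof.seg n1 (n1+n2) P y false (glue n1 n2 n3 (fun _ => false) x2 x3)
                      (SRBPproof.pch n1 n2 n3 P y x1' x2 x3 i) := by rw [ih, ← hcheq i]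
                  _ = SRBPproof.pch n1 n2 n3 P y x1' x2 x3 (i+1) :=
                      (SRBPproof.pch_succ_false P y x1' x2 x3 i hoi).symm
                  _ = SRBPproof.pch n1 n2 n3 P y x1 x2 x3' (i+1) := hcheq (i+1)
              · calc SRBPproof.pch n1 n2 n3 P y x1 x2 x3 (i+1)
                    = SRBPproof.seg n1 (n1+n2) P y true (glue n1 n2 n3 x1 x2 (fun _ => false))
                      (SRBPproof.pch n1 n2 n3 P y x1 x2 x3 i) :=
                      SRBPproof.pch_succ_true P y x1 x2 x3 i hoi
                  _ = SRBPproof.seg n1 (n1+n2) P y true (glue n1 n2 n3 x1 x2 (fun _ => false))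
                      (SRBPproof.pch n1 n2 n3 P y x1 x2 x3' i) := by rw [ih]
                  _ = SRBPproof.pch n1 n2 n3 P y x1 x2 x3' (i+1) :=
                      (SRBPproof.pch_succ_true P y x1 x2 x3' i hoi).symm
          have hfun : SRBPproof.pch n1 n2 n3 P y x1 x2 x3
              = SRBPproof.pch n1 n2 n3 P y x1 x2 x3' := funext hfinal
          show enc (SRBPproof.slotF n1 (n1+n2) P o0 hsize (SRBPproof.pch n1 n2 n3 P y x1 x2 x3),
            SRBPproof.outbF P Hn (SRBPproof.pch n1 n2 n3 P y x1 x2 x3)) = t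
          rw [hfun]
          exact ha1
        constructor
        · intro h
          exact ⟨⟨x1, h⟩, trivial, ⟨x3, h⟩⟩
        · rintro ⟨⟨x1', hb1⟩, -, ⟨x3', ha1⟩⟩
          exact rect x1' x3' hb1 ha1
    · -- the communication bound
      have hc1 : ((T / n2 : ℕ) : ℝ) ≤ (T : ℝ) / (n2 : ℝ) := Nat.cast_div_le
      have hS' : (1:ℝ) ≤ (S:ℝ) := by exact_mod_cast hS
      have hS0 : (0:ℝ) ≤ (S:ℝ) := by positivity
      have hc2 : (S:ℝ) * ((T / n2 : ℕ) : ℝ) ≤ (S:ℝ) * ((T:ℝ)/(n2:ℝ)) :=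
        mul_le_mul_of_nonneg_left hc1 hS0
      push_cast
      nlinarith [hc2, hS']
end
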